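/- The only power dominating set of the empty graph on n vertices is the full vertex set; hence 𝒫(K̄ₙ;x) = xⁿ. Moreover, a graph G has exactly one distinct power domination root if and only if G is the empty graph K̄ₙ, in which case the only root is 0. -/

import Mathlib

open Finset Polynomial

/-- A set `T` is closed under the zero forcing rule: whenever `v ∈ T` has exactly one
neighbor outside `T`, that neighbor is in `T`. -/
def SimpleGraph.ForceClosed {V : Type*} (G : SimpleGraph V) (T : Set V) : Prop :=
  ∀ v ∈ T, ∀ w : V, G.neighborSet v \ T = {w} → w ∈ T

/-- `S` is a zero forcing set: starting from `S` and applying the forcing rule repeatedly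
colors every vertex, i.e. every force-closed superset of `S` is everything. -/
def SimpleGraph.IsZeroForcingSet {V : Type*} (G : SimpleGraph V) (S : Set V) : Prop :=
  ∀ T : Set V, S ⊆ T → G.ForceClosed T → T = Set.univ

/-- The closed neighborhood `N[S]` of a set of vertices. -/
def SimpleGraph.closedNbhd {V : Type*} (G : SimpleGraph V) (S : Set V) : Set V :=
  S ∪ {v | ∃ u ∈ S, G.Adj u v}

/-- `S` is a power dominating set: first color `N[S]` (domination step), then the
forcing process colors every vertex. -/
def SimpleGraph.IsPowerDomSet {V : Type*} (G : SimpleGraph V) (S : Set V) : Prop :=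
  G.IsZeroForcingSet (G.closedNbhd S)

/-- `S` is a dominating set. -/
def SimpleGraph.IsDomSet {V : Type*} (G : SimpleGraph V) (S : Set V) : Prop :=
  G.closedNbhd S = Set.univ

/-- `p(G;i)`: the number of power dominating sets of `G` of cardinality `i`. -/
noncomputable def pdCount {V : Type*} [Fintype V] (G : SimpleGraph V) (i : ℕ) : ℕ :=
  Nat.card {S : Finset V // G.IsPowerDomSet ↑S ∧ S.card = i}

/-- The power domination polynomial `𝒫(G;x) = ∑_{i=1}^n p(G;i) xⁱ`. -/
noncomputable def pdPoly {V : Type*} [Fintype V] (G : SimpleGraph V) : Polynomial ℤ :=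
  ∑ i ∈ Finset.Icc 1 (Fintype.card V), Polynomial.C (pdCount G i : ℤ) * Polynomial.X ^ i


section Aux

variable {V : Type*}

lemma closedNbhd_bot (S : Set V) : (⊥ : SimpleGraph V).closedNbhd S = S := by
  simp [SimpleGraph.closedNbhd]

lemma forceClosed_bot (T : Set V) : (⊥ : SimpleGraph V).ForceClosed T := by
  intro v hv w hw
  exfalso
  have hmem : w ∈ (⊥ : SimpleGraph V).neighborSet v \ T := by rw [hw]; rfl
  simp at hmem

lemma pd_bot_iff [Fintype V] (S : Finset V) :
    (⊥ : SimpleGraph V).IsPowerDomSet ↑S ↔ S = Finset.univ := by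
  constructor
  · intro h
    have hS : (↑S : Set V) = Set.univ := by
      apply h ↑S
      · rw [closedNbhd_bot]
      · exact forceClosed_bot _
    exact Finset.coe_eq_univ.mp hS
  · intro h T hT _
    apply Set.eq_univ_of_univ_subset
    refine subset_trans ?_ hT
    intro v _
    exact Or.inl (by simp [h])

lemma pdCount_bot [Fintype V] (i : ℕ) :
    pdCount (⊥ : SimpleGraph V) i = if i = Fintype.card V then 1 else 0 := by
  unfold pdCount
  split_ifs with h
  · have : ∀ S : Finset V, ((⊥ : SimpleGraph V).IsPowerDomSet ↑S ∧ S.card = i) ↔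
        S = Finset.univ := by
      intro S
      constructor
      · rintro ⟨h1, _⟩
        exact (pd_bot_iff S).mp h1
      · rintro rfl
        exact ⟨(pd_bot_iff _).mpr rfl, by simp [h]⟩
    haveI : Unique {S : Finset V // (⊥ : SimpleGraph V).IsPowerDomSet ↑S ∧ S.card = i} := by
      refine ⟨⟨⟨Finset.univ, (this _).mpr rfl⟩⟩, ?_⟩
      rintro ⟨S, hS⟩
      simpa [Subtype.ext_iff] using (this S).mp hS
    exact Nat.card_unique
  · haveI : IsEmpty {S : Finset V // (⊥ : SimpleGraph V).IsPowerDomSet ↑S ∧ S.card = i} := by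
      constructor
      rintro ⟨S, h1, h2⟩
      apply h
      rw [← h2, (pd_bot_iff S).mp h1]
      simp
    exact Nat.card_of_isEmpty

lemma pdPoly_bot [Fintype V] [Nonempty V] :
    pdPoly (⊥ : SimpleGraph V) = Polynomial.X ^ (Fintype.card V) := by
  unfold pdPoly
  rw [Finset.sum_eq_single (Fintype.card V)]
  · rw [pdCount_bot]
    simp
  · intro i _ hi
    rw [pdCount_bot, if_neg hi]
    simp
  · intro h
    exfalso
    apply h
    rw [Finset.mem_Icc]
    exact ⟨Fintype.card_pos, le_refl _⟩

lemma pdPoly_coeff [Fintype V] (G : SimpleGraph V) (j : ℕ) :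
    (pdPoly G).coeff j =
      if j ∈ Finset.Icc 1 (Fintype.card V) then (pdCount G j : ℤ) else 0 := by
  unfold pdPoly
  rw [Polynomial.finset_sum_coeff]
  simp only [Polynomial.coeff_C_mul, Polynomial.coeff_X_pow, mul_ite, mul_one, mul_zero]
  rw [Finset.sum_ite_eq]

lemma pdCount_pos [Fintype V] (G : SimpleGraph V) (i : ℕ)
    (h : ∃ S : Finset V, G.IsPowerDomSet ↑S ∧ S.card = i) : 1 ≤ pdCount G i := by
  obtain ⟨S, h1, h2⟩ := h
  haveI : Nonempty {S : Finset V // G.IsPowerDomSet ↑S ∧ S.card = i} := ⟨⟨S, h1, h2⟩⟩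
  exact Nat.card_pos

lemma isPowerDomSet_univ [Fintype V] (G : SimpleGraph V) :
    G.IsPowerDomSet ↑(Finset.univ : Finset V) := by
  intro T hT _
  apply Set.eq_univ_of_univ_subset
  refine subset_trans ?_ hT
  intro v _
  exact Or.inl (by simp)

lemma isPowerDomSet_erase [Fintype V] [DecidableEq V] {G : SimpleGraph V} {u w : V}
    (h : G.Adj u w) : G.IsPowerDomSet ↑(Finset.univ.erase w) := by
  intro T hT _
  apply Set.eq_univ_of_univ_subset
  refine subset_trans ?_ hT
  intro v _
  by_cases hv : v = w
  · subst hv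
    exact Or.inr ⟨u, by simp [h.ne], h⟩
  · exact Or.inl (by simp [hv])

end Aux

theorem stmt16 {V : Type*} [Fintype V] [Nonempty V] (G : SimpleGraph V) :
    ((∀ S : Finset V, (⊥ : SimpleGraph V).IsPowerDomSet ↑S ↔ S = Finset.univ) ∧
      pdPoly (⊥ : SimpleGraph V) = Polynomial.X ^ (Fintype.card V)) ∧
    ((((pdPoly G).map (Int.castRingHom ℂ)).roots.toFinset.card = 1) ↔ G = ⊥) ∧
    (G = ⊥ → ((pdPoly G).map (Int.castRingHom ℂ)).roots.toFinset = {0}) := by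
  classical
  set n := Fintype.card V with hn
  have hn1 : 1 ≤ n := Fintype.card_pos
  have part1 : (∀ S : Finset V, (⊥ : SimpleGraph V).IsPowerDomSet ↑S ↔ S = Finset.univ) ∧
      pdPoly (⊥ : SimpleGraph V) = Polynomial.X ^ n := ⟨pd_bot_iff, pdPoly_bot⟩
  have part3 : ∀ H : SimpleGraph V, H = ⊥ →
      ((pdPoly H).map (Int.castRingHom ℂ)).roots.toFinset = {0} := by
    rintro H rfl
    rw [pdPoly_bot, Polynomial.map_pow, Polynomial.map_X, Polynomial.roots_pow,
      Polynomial.roots_X]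
    rw [Multiset.toFinset_nsmul _ _ (by omega : n ≠ 0)]
    simp
  refine ⟨part1, ⟨?_, ?_⟩, part3 G⟩
  · intro hcard
    by_contra hG
    -- G ≠ ⊥, so G has an edge
    have hedge : ∃ u w, G.Adj u w := by
      by_contra hc
      push_neg at hc
      apply hG
      ext u w
      simp only [SimpleGraph.bot_adj, iff_false]
      exact hc u w
    obtain ⟨u, w, huw⟩ := hedge
    haveI : Nontrivial V := ⟨u, w, huw.ne⟩
    have hn2 : 2 ≤ n := Fintype.one_lt_card
    set P := (pdPoly G).map (Int.castRingHom ℂ) with hP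
    have hcoeff : ∀ j, P.coeff j =
        if j ∈ Finset.Icc 1 n then (pdCount G j : ℂ) else 0 := by
      intro j
      rw [hP, Polynomial.coeff_map, pdPoly_coeff]
      split_ifs <;> simp
    have hpdn : 1 ≤ pdCount G n :=
      pdCount_pos G n ⟨Finset.univ, isPowerDomSet_univ G, by simp [hn]⟩
    have hpdn1 : 1 ≤ pdCount G (n - 1) := by
      refine pdCount_pos G (n - 1) ⟨Finset.univ.erase w, isPowerDomSet_erase huw, ?_⟩
      rw [Finset.card_erase_of_mem (Finset.mem_univ w), Finset.card_univ]
    have hcn : P.coeff n ≠ 0 := by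
      rw [hcoeff, if_pos (by rw [Finset.mem_Icc]; omega)]
      exact Nat.cast_ne_zero.mpr (by omega)
    have hcn1 : P.coeff (n - 1) ≠ 0 := by
      rw [hcoeff, if_pos (by rw [Finset.mem_Icc]; omega)]
      exact Nat.cast_ne_zero.mpr (by omega)
    have hPne : P ≠ 0 := fun h => hcn (by rw [h]; simp)
    have hdeg : P.natDegree = n := by
      apply le_antisymm
      · rw [Polynomial.natDegree_le_iff_coeff_eq_zero]
        intro m hm
        rw [hcoeff, if_neg (by rw [Finset.mem_Icc]; omega)]
      · exact Polynomial.le_natDegree_of_ne_zero hcn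
    have hroot0 : (0 : ℂ) ∈ P.roots := by
      rw [Polynomial.mem_roots hPne]
      rw [Polynomial.IsRoot, ← Polynomial.coeff_zero_eq_eval_zero, hcoeff,
        if_neg (by simp)]
    -- all roots are 0
    have htf : P.roots.toFinset = {0} := by
      obtain ⟨a, ha⟩ := Finset.card_eq_one.mp hcard
      have h0 : (0 : ℂ) ∈ P.roots.toFinset := Multiset.mem_toFinset.mpr hroot0
      rw [ha] at h0 ⊢
      rw [Finset.mem_singleton] at h0
      rw [h0]
    have hall : ∀ r ∈ P.roots, r = 0 := by
      intro r hr
      have : r ∈ P.roots.toFinset := Multiset.mem_toFinset.mpr hr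
      rw [htf, Finset.mem_singleton] at this
      exact this
    have hsplit : P.roots.card = P.natDegree :=
      (Polynomial.splits_iff_card_roots).mp (IsAlgClosed.splits P)
    have hrep : P.roots = Multiset.replicate n 0 := by
      rw [← hdeg, ← hsplit]
      exact (Multiset.eq_replicate_card).mpr hall
    have hPfac : Polynomial.C P.leadingCoeff *
        (P.roots.map fun a => Polynomial.X - Polynomial.C a).prod = P :=
      Polynomial.C_leadingCoeff_mul_prod_multiset_X_sub_C hsplit
    rw [hrep] at hPfac
    simp only [Multiset.map_replicate, map_zero, sub_zero, Multiset.prod_replicate] at hPfac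
    apply hcn1
    rw [← hPfac, Polynomial.coeff_C_mul, Polynomial.coeff_X_pow, if_neg (by omega), mul_zero]
  · rintro rfl
    rw [part3 ⊥ rfl]
    simp
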